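/- Let X_1,…,X_M be i.i.d. Bernoulli (i.e., {0,1}-valued) random variables with mean X, and let X̄ = (1/M)Σ_k X_k. Then for every 0 < μ₁ < 1, μ₂ > 0, and M ≥ 16e/(μ₁μ₂), one has ℙ(|X̄ − X| ≥ μ₁X + μ₂) ≤ exp(−Mμ₁μ₂/(16e)). -/

import Mathlib

open MeasureTheory ProbabilityTheory

lemma exp_quad_bound {x : ℝ} (hx : |x| ≤ 1) : Real.exp x ≤ 1 + x + x ^ 2 := by
  have h := Real.exp_bound hx (by norm_num : 0 < 2)
  have hsum : ∑ m ∈ Finset.range 2, x ^ m / m.factorial = 1 + x := by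
    simp [Finset.sum_range_succ]
  rw [hsum, sq_abs] at h
  norm_num [Nat.factorial] at h
  nlinarith [le_abs_self (Real.exp x - (1 + x)), sq_nonneg x]

theorem bernoulli_relative_tail_bound
    {Ω : Type*} [MeasureSpace Ω] [IsProbabilityMeasure (ℙ : Measure Ω)]
    (M : ℕ) (hM : 0 < M) (X : Fin M → Ω → ℝ)
    (hmeas : ∀ k, Measurable (X k))
    (hindep : iIndepFun X ℙ)
    (hident : ∀ k, IdentDistrib (X k) (X ⟨0, hM⟩) ℙ ℙ)
    (hval : ∀ k, ∀ᵐ ω ∂ℙ, X k ω = 0 ∨ X k ω = 1)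
    (p : ℝ) (hmean : ∀ k, ∫ ω, X k ω ∂ℙ = p)
    (μ₁ μ₂ : ℝ) (hμ₁ : 0 < μ₁) (hμ₁' : μ₁ < 1) (hμ₂ : 0 < μ₂)
    (hMbig : 16 * Real.exp 1 / (μ₁ * μ₂) ≤ (M : ℝ)) :
    (ℙ {ω | μ₁ * p + μ₂ ≤ |(M : ℝ)⁻¹ * (∑ k, X k ω) - p|}).toReal
      ≤ Real.exp (-((M : ℝ) * μ₁ * μ₂) / (16 * Real.exp 1)) := by
  have hMpos : (0:ℝ) < M := Nat.cast_pos.mpr hM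
  set ε : ℝ := μ₁ * p + μ₂ with hε
  -- integrability of each X k
  have hint : ∀ k, Integrable (X k) ℙ := by
    intro k
    refine Integrable.mono' (integrable_const 1) (hmeas k).aestronglyMeasurable ?_
    filter_upwards [hval k] with ω h
    rcases h with h | h <;> simp [h]
  -- p ∈ [0,1]
  have hp0 : 0 ≤ p := by
    rw [← hmean ⟨0, hM⟩]
    refine integral_nonneg_of_ae ?_
    filter_upwards [hval ⟨0, hM⟩] with ω h
    rcases h with h | h <;> simp [h]
  have hp1 : p ≤ 1 := by
    rw [← hmean ⟨0, hM⟩]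
    calc ∫ ω, X ⟨0, hM⟩ ω ∂ℙ ≤ ∫ _, (1:ℝ) ∂ℙ := by
          refine integral_mono_ae (hint _) (integrable_const 1) ?_
          filter_upwards [hval ⟨0, hM⟩] with ω h
          rcases h with h | h <;> simp [h]
    _ = 1 := by simp
  -- integrability of exp(t * X k)
  have hintexp : ∀ (t : ℝ) k, Integrable (fun ω => Real.exp (t * X k ω)) ℙ := by
    intro t k
    refine Integrable.mono' (integrable_const (max 1 (Real.exp t)))
      ((hmeas k).const_mul t).exp.aestronglyMeasurable ?_
    filter_upwards [hval k] with ω h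
    rcases h with h | h <;>
      simp [h, abs_of_nonneg (Real.exp_nonneg _), le_max_left, le_max_right]
  -- mgf of each Bernoulli
  have hmgf : ∀ (t : ℝ) k, mgf (X k) ℙ t = 1 + (Real.exp t - 1) * p := by
    intro t k
    have hcongr : (fun ω => Real.exp (t * X k ω))
        =ᵐ[ℙ] fun ω => 1 + (Real.exp t - 1) * X k ω := by
      filter_upwards [hval k] with ω h
      rcases h with h | h <;> simp [h]
    rw [mgf, integral_congr_ae hcongr, integral_add (integrable_const 1)
      ((hint k).const_mul _), integral_const_mul, hmean k, integral_const]
    simp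
  set S : Ω → ℝ := ∑ i, X i with hS
  have hSapply : ∀ ω, S ω = ∑ k, X k ω := fun ω => by simp [hS]
  have hintS : ∀ t : ℝ, Integrable (fun ω => Real.exp (t * S ω)) ℙ := fun t =>
    hindep.integrable_exp_mul_sum hmeas (fun i _ => hintexp t i)
  have hmgfS : ∀ t : ℝ, mgf S ℙ t = (1 + (Real.exp t - 1) * p) ^ M := by
    intro t
    rw [hS, hindep.mgf_sum hmeas]
    simp [hmgf t]
  -- bound mgf of S ≤ exp (M * p * (exp t - 1)), given base nonneg
  have hmgfS_le : ∀ t : ℝ, 0 ≤ 1 + (Real.exp t - 1) * p →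
      mgf S ℙ t ≤ Real.exp ((M:ℝ) * ((Real.exp t - 1) * p)) := by
    intro t hb
    rw [hmgfS t]
    calc (1 + (Real.exp t - 1) * p) ^ M ≤ (Real.exp ((Real.exp t - 1) * p)) ^ M := by
          exact pow_le_pow_left₀ hb (by linarith [Real.add_one_le_exp ((Real.exp t - 1) * p)]) M
    _ = Real.exp ((M:ℝ) * ((Real.exp t - 1) * p)) := by
          rw [← Real.exp_nat_mul]
  -- quadratic bounds on exp(±μ₁)
  have hq1 : Real.exp μ₁ ≤ 1 + μ₁ + μ₁ ^ 2 :=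
    exp_quad_bound (by rw [abs_of_pos hμ₁]; linarith)
  have hq2 : Real.exp (-μ₁) ≤ 1 - μ₁ + μ₁ ^ 2 := by
    have := exp_quad_bound (x := -μ₁) (by rw [abs_of_neg (by linarith)]; linarith)
    nlinarith
  -- upper tail
  have hup : (ℙ {ω | (M:ℝ) * (p + ε) ≤ S ω}).toReal ≤ Real.exp (-((M:ℝ) * μ₁ * μ₂)) := by
    have h1 := measure_ge_le_exp_mul_mgf (μ := ℙ) (X := S) ((M:ℝ) * (p + ε)) hμ₁.le
      (hintS μ₁)
    have hb : 0 ≤ 1 + (Real.exp μ₁ - 1) * p := by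
      nlinarith [Real.add_one_le_exp μ₁]
    refine h1.trans ?_
    calc Real.exp (-μ₁ * ((M:ℝ) * (p + ε))) * mgf S ℙ μ₁
        ≤ Real.exp (-μ₁ * ((M:ℝ) * (p + ε))) * Real.exp ((M:ℝ) * ((Real.exp μ₁ - 1) * p)) := by
          exact mul_le_mul_of_nonneg_left (hmgfS_le μ₁ hb) (Real.exp_nonneg _)
    _ = Real.exp (-μ₁ * ((M:ℝ) * (p + ε)) + (M:ℝ) * ((Real.exp μ₁ - 1) * p)) := by
          rw [← Real.exp_add]
    _ ≤ Real.exp (-((M:ℝ) * μ₁ * μ₂)) := by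
          apply Real.exp_le_exp.mpr
          have : (Real.exp μ₁ - 1) * p ≤ (μ₁ + μ₁ ^ 2) * p := by nlinarith
          simp only [hε]
          nlinarith [mul_le_mul_of_nonneg_left this hMpos.le]
  -- lower tail
  have hlo : (ℙ {ω | S ω ≤ (M:ℝ) * (p - ε)}).toReal ≤ Real.exp (-((M:ℝ) * μ₁ * μ₂)) := by
    have h1 := measure_le_le_exp_mul_mgf (μ := ℙ) (X := S) ((M:ℝ) * (p - ε))
      (neg_nonpos.mpr hμ₁.le) (hintS (-μ₁))
    have hb : 0 ≤ 1 + (Real.exp (-μ₁) - 1) * p := by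
      nlinarith [Real.exp_nonneg (-μ₁)]
    refine h1.trans ?_
    calc Real.exp (-(-μ₁) * ((M:ℝ) * (p - ε))) * mgf S ℙ (-μ₁)
        ≤ Real.exp (μ₁ * ((M:ℝ) * (p - ε))) * Real.exp ((M:ℝ) * ((Real.exp (-μ₁) - 1) * p)) := by
          rw [neg_neg]
          exact mul_le_mul_of_nonneg_left (hmgfS_le (-μ₁) hb) (Real.exp_nonneg _)
    _ = Real.exp (μ₁ * ((M:ℝ) * (p - ε)) + (M:ℝ) * ((Real.exp (-μ₁) - 1) * p)) := by
          rw [← Real.exp_add]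
    _ ≤ Real.exp (-((M:ℝ) * μ₁ * μ₂)) := by
          apply Real.exp_le_exp.mpr
          have : (Real.exp (-μ₁) - 1) * p ≤ (-μ₁ + μ₁ ^ 2) * p := by nlinarith
          simp only [hε]
          nlinarith [mul_le_mul_of_nonneg_left this hMpos.le]
  -- event inclusion
  have hsub : {ω | μ₁ * p + μ₂ ≤ |(M : ℝ)⁻¹ * (∑ k, X k ω) - p|}
      ⊆ {ω | (M:ℝ) * (p + ε) ≤ S ω} ∪ {ω | S ω ≤ (M:ℝ) * (p - ε)} := by
    intro ω hω
    simp only [Set.mem_setOf_eq] at hω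
    rcases le_abs.mp hω with h | h
    · left
      have h2 : (M:ℝ) * ε ≤ (M:ℝ) * ((M:ℝ)⁻¹ * (∑ k, X k ω) - p) :=
        mul_le_mul_of_nonneg_left h hMpos.le
      have h3 : (M:ℝ) * ((M:ℝ)⁻¹ * (∑ k, X k ω)) = ∑ k, X k ω := by
        field_simp
      simp only [Set.mem_setOf_eq, hSapply]
      rw [mul_sub, h3] at h2
      linarith
    · right
      have h2 : (M:ℝ) * ε ≤ (M:ℝ) * -((M:ℝ)⁻¹ * (∑ k, X k ω) - p) :=
        mul_le_mul_of_nonneg_left h hMpos.le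
      have h3 : (M:ℝ) * ((M:ℝ)⁻¹ * (∑ k, X k ω)) = ∑ k, X k ω := by
        field_simp
      simp only [Set.mem_setOf_eq, hSapply]
      rw [mul_neg, mul_sub, h3] at h2
      linarith
  -- put together
  have hT : 16 * Real.exp 1 ≤ (M:ℝ) * μ₁ * μ₂ := by
    rw [div_le_iff₀ (by positivity)] at hMbig
    nlinarith
  have hmeasle : (ℙ {ω | μ₁ * p + μ₂ ≤ |(M : ℝ)⁻¹ * (∑ k, X k ω) - p|}).toReal
      ≤ (ℙ {ω | (M:ℝ) * (p + ε) ≤ S ω}).toReal + (ℙ {ω | S ω ≤ (M:ℝ) * (p - ε)}).toReal := by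
    rw [← ENNReal.toReal_add (measure_ne_top _ _) (measure_ne_top _ _)]
    refine ENNReal.toReal_mono (by finiteness) ?_
    exact le_trans (measure_mono hsub) (measure_union_le _ _)
  refine hmeasle.trans ((add_le_add hup hlo).trans ?_)
  -- 2 * exp(-T) ≤ exp(-T/(16e))
  set T : ℝ := (M:ℝ) * μ₁ * μ₂ with hTdef
  have he : (2:ℝ) ≤ Real.exp 1 := by
    have := Real.add_one_le_exp (1:ℝ); linarith
  have hepos : (0:ℝ) < Real.exp 1 := Real.exp_pos 1
  have hTnn : (0:ℝ) ≤ T := by positivity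
  have harg : (1:ℝ) ≤ T - T / (16 * Real.exp 1) := by
    have h32 : (32:ℝ) ≤ 16 * Real.exp 1 := by linarith
    have hdd : T / (16 * Real.exp 1) ≤ T / 32 :=
      div_le_div_of_nonneg_left hTnn (by norm_num) h32
    have hT32 : (32:ℝ) ≤ T := by linarith
    linarith
  have h2' : (2:ℝ) ≤ Real.exp (T - T / (16 * Real.exp 1)) := by
    have := Real.add_one_le_exp (T - T / (16 * Real.exp 1))
    linarith
  have hkey : Real.exp (-T) + Real.exp (-T) ≤ Real.exp (-T / (16 * Real.exp 1)) := by
    have : Real.exp (-T) + Real.exp (-T) ≤ Real.exp (T - T / (16 * Real.exp 1)) * Real.exp (-T) := by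
      have hh := mul_le_mul_of_nonneg_right h2' (Real.exp_nonneg (-T))
      linarith
    refine this.trans (le_of_eq ?_)
    rw [← Real.exp_add]
    congr 1
    ring
  calc Real.exp (-T) + Real.exp (-T) ≤ Real.exp (-T / (16 * Real.exp 1)) := hkey
  _ = Real.exp (-((M : ℝ) * μ₁ * μ₂) / (16 * Real.exp 1)) := by rw [hTdef]
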